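/- arXiv:1905.08691 — 7 statements merged into one kernel-verified Lean document; each statement's English description precedes it below -/
import Mathlib

section
/- Let s be a closed axis-aligned facet contained in the hyperplane {x ∈ ℝ^d : x_k = c}, and let p be a point whose L∞ distance to s is strictly less than its L∞ distance to every point of the boundary ∂s of s. Then the L∞ distance from p to s equals the L∞ distance from p to the hyperplane x_k = c, namely |p_k − c|. -/
/-- If the L∞ distance from `p` to a facet `s` (a nonempty compact
subset of the hyperplane `x k = c`) is strictly less than the distance from `p`
to every point of the relative boundary of `s`, then the distance from `p` to
`s` equals the distance `|p k - c|` to the hyperplane. -/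
theorem stmt_0 {d : ℕ} (k : Fin d) (c : ℝ)
    (s : Set (Fin d → ℝ)) (hne : s.Nonempty) (hcpt : IsCompact s)
    (hsub : s ⊆ {x : Fin d → ℝ | x k = c})
    (p : Fin d → ℝ)
    (hp : ∀ q ∈ s ∩ closure ({x : Fin d → ℝ | x k = c} \ s),
      Metric.infDist p s < dist p q) :
    Metric.infDist p s = |p k - c| := by
  have hpk : ∀ q ∈ s, q k = c := fun q hq => hsub hq
  have hlow : |p k - c| ≤ Metric.infDist p s := by
    by_contra hlt
    push_neg at hlt
    obtain ⟨y, hy, hdy⟩ := (Metric.infDist_lt_iff hne).mp hlt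
    have h1 : dist (p k) (y k) ≤ dist p y := dist_le_pi_dist p y k
    rw [Real.dist_eq, hpk y hy] at h1
    linarith
  refine le_antisymm ?_ hlow
  by_contra hcon
  push_neg at hcon
  set D := Metric.infDist p s with hD
  obtain ⟨q, hq, hqd⟩ := hcpt.exists_infDist_eq_dist hne p
  set p' : Fin d → ℝ := Function.update p k c with hp'
  have hqk : q k = c := hpk q hq
  set γ : ℝ → (Fin d → ℝ) := fun t => fun i => q i + t * (p' i - q i) with hγ
  have hγcont : Continuous γ := by
    apply continuous_pi
    intro i
    fun_prop
  have hγk : ∀ t, γ t k = c := by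
    intro t
    simp [hγ, hqk, hp', Function.update_self]
  have hD0 : (0:ℝ) ≤ D := Metric.infDist_nonneg
  have hbound : ∀ t ∈ Set.Icc (0:ℝ) 1, dist p (γ t) ≤ D := by
    intro t ht
    rw [dist_pi_le_iff hD0]
    intro i
    by_cases hik : i = k
    · subst hik
      rw [hγk, Real.dist_eq]
      exact le_of_lt hcon
    · have hpi : p' i = p i := Function.update_of_ne hik c p
      have : γ t i = q i + t * (p i - q i) := by simp [hγ, hpi]
      rw [this, Real.dist_eq]
      have : p i - (q i + t * (p i - q i)) = (1 - t) * (p i - q i) := by ring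
      rw [this, abs_mul]
      have h1 : |1 - t| ≤ 1 := by
        rw [abs_le]; constructor <;> [linarith [ht.2]; linarith [ht.1]]
      have h2 : |p i - q i| ≤ D := by
        have := dist_le_pi_dist p q i
        rw [Real.dist_eq] at this
        linarith [hqd ▸ this]
      calc |1 - t| * |p i - q i| ≤ 1 * |p i - q i| :=
            mul_le_mul_of_nonneg_right h1 (abs_nonneg _)
        _ = |p i - q i| := one_mul _
        _ ≤ D := h2
  set T : Set ℝ := Set.Icc (0:ℝ) 1 ∩ γ ⁻¹' s with hT
  have hT0 : (0:ℝ) ∈ T := by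
    constructor
    · exact ⟨le_refl 0, zero_le_one⟩
    · show γ 0 ∈ s
      have : γ 0 = q := by funext i; simp [hγ]
      rwa [this]
  have hTcpt : IsCompact T :=
    isCompact_Icc.inter_right (hcpt.isClosed.preimage hγcont)
  set t₀ := sSup T with ht₀def
  have ht₀ : t₀ ∈ T := hTcpt.sSup_mem ⟨0, hT0⟩
  have ht₀le : ∀ t ∈ T, t ≤ t₀ := fun t ht =>
    le_csSup hTcpt.bddAbove ht
  have hppdist : dist p p' ≤ |p k - c| := by
    rw [dist_pi_le_iff (abs_nonneg _)]
    intro i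
    by_cases hik : i = k
    · subst hik; simp [hp', Real.dist_eq, Function.update_self]
    · simp [hp', Function.update_of_ne hik, abs_nonneg]
  have ht₀lt : t₀ < 1 := by
    rcases lt_or_eq_of_le ht₀.1.2 with h | h
    · exact h
    · exfalso
      have hγ1 : γ 1 = p' := by funext i; simp [hγ]
      have hp's : p' ∈ s := by
        have h2 : γ 1 ∈ s := by rw [← h]; exact ht₀.2
        rwa [hγ1] at h2
      have : D ≤ dist p p' := Metric.infDist_le_dist_of_mem hp's
      linarith
  -- the point γ t₀ is in s and in the closure of H \ s
  have hq₀s : γ t₀ ∈ s := ht₀.2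
  have hq₀cl : γ t₀ ∈ closure ({x : Fin d → ℝ | x k = c} \ s) := by
    set u : ℕ → ℝ := fun n => t₀ + (1 - t₀) * (1 / (n + 1)) with hu
    have hupos : ∀ n : ℕ, t₀ < u n := by
      intro n
      have h1 : (0:ℝ) < 1 / (n + 1) := by positivity
      have h2 : (0:ℝ) < 1 - t₀ := by linarith
      have : 0 < (1 - t₀) * (1 / (n + 1)) := mul_pos h2 h1
      simp only [hu]; linarith
    have hule : ∀ n : ℕ, u n ≤ 1 := by
      intro n
      have h1 : (1:ℝ) / (n + 1) ≤ 1 := by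
        rw [div_le_one (by positivity)]; linarith [Nat.cast_nonneg (α := ℝ) n]
      have h2 : (0:ℝ) ≤ 1 - t₀ := by linarith
      have : (1 - t₀) * (1 / (n + 1)) ≤ (1 - t₀) * 1 :=
        mul_le_mul_of_nonneg_left h1 h2
      simp only [hu]; linarith
    have hmem : ∀ n : ℕ, γ (u n) ∈ {x : Fin d → ℝ | x k = c} \ s := by
      intro n
      refine ⟨hγk (u n), ?_⟩
      intro hin
      have : u n ∈ T := ⟨⟨le_trans (le_trans ht₀.1.1 (le_of_lt (hupos n))) le_rfl, hule n⟩, hin⟩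
      have := ht₀le _ this
      linarith [hupos n]
    have hulim : Filter.Tendsto u Filter.atTop (nhds t₀) := by
      have h1 : Filter.Tendsto (fun n : ℕ => (1:ℝ) / (n + 1)) Filter.atTop (nhds 0) :=
        tendsto_one_div_add_atTop_nhds_zero_nat
      have h2 : Filter.Tendsto (fun n : ℕ => t₀ + (1 - t₀) * (1 / (n + 1)))
          Filter.atTop (nhds (t₀ + (1 - t₀) * 0)) :=
        Filter.Tendsto.const_add _ (Filter.Tendsto.const_mul _ h1)
      simpa [hu, one_div] using h2
    have hglim : Filter.Tendsto (fun n => γ (u n)) Filter.atTop (nhds (γ t₀)) :=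
      (hγcont.tendsto t₀).comp hulim
    exact mem_closure_of_tendsto hglim (Filter.Eventually.of_forall hmem)
  have hcontr := hp (γ t₀) ⟨hq₀s, hq₀cl⟩
  have := hbound t₀ ht₀.1
  linarith
end

section
/- Let s be a compact subset of the hyperplane {x ∈ ℝ^d : x_k = c} and p ∉ aff(s) a point with μ∞(p,s) > |p_k − c|. Then the infimum defining μ∞(p,s) is attained at a point q of the relative boundary of s, and moreover μ∞(p,q) = |p_j − q_j| for some coordinate j ≠ k. -/
/-- For a compact facet `s` in the hyperplane `x k = c` and a point
`p` off the hyperplane with `μ∞(p,s) > |p k - c|`, the distance to `s` is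
attained at a point `q` of the relative boundary of `s`, and moreover
`μ∞(p,q) = |p j - q j|` for some coordinate `j ≠ k`. -/
theorem stmt_1 {d : ℕ} (k : Fin d) (c : ℝ)
    (s : Set (Fin d → ℝ)) (hne : s.Nonempty) (hcpt : IsCompact s)
    (hsub : s ⊆ {x : Fin d → ℝ | x k = c})
    (p : Fin d → ℝ) (hpk : p k ≠ c)
    (hfar : |p k - c| < Metric.infDist p s) :
    ∃ q ∈ s ∩ closure ({x : Fin d → ℝ | x k = c} \ s),
      dist p q = Metric.infDist p s ∧
      ∃ j : Fin d, j ≠ k ∧ dist p q = |p j - q j| := by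
  obtain ⟨q, hqs, hq⟩ := hcpt.exists_infDist_eq_dist hne p
  have hqk : q k = c := hsub hqs
  have hfar' : |p k - c| < dist p q := by rwa [hq] at hfar
  have hDpos : 0 < dist p q := lt_of_le_of_lt (abs_nonneg _) hfar'
  have hdk : dist (p k) (q k) = |p k - c| := by rw [Real.dist_eq, hqk]
  -- find maximizing coordinate
  have hne' : (Finset.univ : Finset (Fin d)).Nonempty := ⟨k, Finset.mem_univ k⟩
  obtain ⟨j, -, hj⟩ := Finset.exists_mem_eq_sup Finset.univ hne'
    (fun i => nndist (p i) (q i))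
  have hdj : dist p q = dist (p j) (q j) := by
    rw [dist_pi_def, hj, dist_nndist]
  have hjk : j ≠ k := by
    intro h
    rw [h, hdk] at hdj
    exact absurd hfar' (by rw [hdj]; exact lt_irrefl _)
  -- show q is in the closure of the complement within the hyperplane
  have hcl : q ∈ closure ({x : Fin d → ℝ | x k = c} \ s) := by
    by_contra hcon
    rw [Metric.mem_closure_iff] at hcon
    push_neg at hcon
    obtain ⟨ε, hε, hsep⟩ := hcon
    set r : Fin d → ℝ := Function.update p k c with hr
    set t : ℝ := min (1/2) (ε / (2 * (dist q r + 1))) with ht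
    have hdr : 0 ≤ dist q r := dist_nonneg
    have ht0 : 0 < t := lt_min (by norm_num) (by positivity)
    have ht2 : t ≤ 1/2 := min_le_left _ _
    have ht3 : t ≤ ε / (2 * (dist q r + 1)) := min_le_right _ _
    set q' : Fin d → ℝ := fun i => q i + t * (r i - q i) with hq'
    have hq'k : q' k = c := by simp [hq', hr, hqk]
    have hclose : dist q q' < ε := by
      have h1 : dist q q' ≤ ε / 2 := by
        rw [dist_pi_le_iff (by positivity)]
        intro i
        have hqi : q' i = q i + t * (r i - q i) := rfl
        have h2 : dist (q i) (q' i) = t * |q i - r i| := by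
          rw [Real.dist_eq, hqi,
            show q i - (q i + t * (r i - q i)) = t * (q i - r i) by ring,
            abs_mul, abs_of_nonneg ht0.le]
        have h3 : |q i - r i| ≤ dist q r := by
          rw [← Real.dist_eq]; exact dist_le_pi_dist q r i
        have h4 : t * |q i - r i| ≤ t * dist q r := by
          exact mul_le_mul_of_nonneg_left h3 ht0.le
        have h5 : t * dist q r ≤ ε / 2 := by
          have := mul_le_mul_of_nonneg_right ht3 hdr
          have h6 : ε / (2 * (dist q r + 1)) * dist q r ≤ ε / 2 := by
            rw [div_mul_eq_mul_div, div_le_div_iff₀ (by positivity) (by norm_num)]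
            nlinarith
          linarith
        linarith [h2 ▸ h4]
      linarith
    have hq's : q' ∈ s := by
      by_contra hq'ns
      exact absurd hclose (not_lt.2 (hsep q' ⟨hq'k, hq'ns⟩))
    -- q' is strictly closer to p
    have hle : dist p q' ≤ max ((1 - t) * dist p q) (|p k - c|) := by
      rw [dist_pi_le_iff (le_max_of_le_left (by nlinarith))]
      intro i
      by_cases hik : i = k
      · subst hik
        rw [Real.dist_eq, hq'k]
        exact le_max_right _ _
      · have hri : r i = p i := Function.update_of_ne hik _ _
        have hqi : q' i = q i + t * (r i - q i) := rfl
        have : dist (p i) (q' i) = (1 - t) * |p i - q i| := by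
          rw [Real.dist_eq, hqi, hri]
          rw [show p i - (q i + t * (p i - q i)) = (1 - t) * (p i - q i) by ring]
          rw [abs_mul, abs_of_nonneg (by linarith : (0:ℝ) ≤ 1 - t)]
        rw [this]
        refine le_max_of_le_left ?_
        have : |p i - q i| ≤ dist p q := by
          rw [← Real.dist_eq]; exact dist_le_pi_dist p q i
        nlinarith
    have hlt : max ((1 - t) * dist p q) (|p k - c|) < dist p q := by
      apply max_lt _ hfar'
      nlinarith
    have : Metric.infDist p s ≤ dist p q' := Metric.infDist_le_dist_of_mem hq's
    rw [hq] at this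
    linarith
  exact ⟨q, ⟨hqs, hcl⟩, hq.symm, j, hjk, by rw [hdj, Real.dist_eq]⟩
end

section
/- Let s ⊆ ℝ^d and define the zone Z(s) = {p ∈ ℝ^d : μ∞(p,s) = μ∞(p, aff(s))} where s lies in the hyperplane aff(s) = {x : x_k = c}. For any p ∈ Z(s) with q ∈ s achieving μ∞(p,q) = μ∞(p,s), and any t ∈ [0,1], the point w = t·p + (1−t)·q also lies in Z(s) and μ∞(w,s) = t·μ∞(p,s). -/
/-- For a point `p` in the zone `Z(s)` of a facet `s` in the
hyperplane `x k = c`, with the distance attained at `q ∈ s`, every convex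
combination `w = t•p + (1-t)•q` is again in `Z(s)` and `μ∞(w,s) = t·μ∞(p,s)`. -/
theorem stmt_2 {d : ℕ} (k : Fin d) (c : ℝ)
    (s : Set (Fin d → ℝ)) (hne : s.Nonempty) (hcpt : IsCompact s)
    (hsub : s ⊆ {x : Fin d → ℝ | x k = c})
    (p q : Fin d → ℝ) (hq : q ∈ s)
    (hzone : Metric.infDist p s = |p k - c|)
    (hattain : dist p q = Metric.infDist p s)
    (t : ℝ) (ht : t ∈ Set.Icc (0:ℝ) 1) :
    Metric.infDist (t • p + (1 - t) • q) s = |(t • p + (1 - t) • q) k - c| ∧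
    Metric.infDist (t • p + (1 - t) • q) s = t * Metric.infDist p s := by

  obtain ⟨ht0, ht1⟩ := ht
  set w := t • p + (1 - t) • q with hw
  have hqk : q k = c := hsub hq
  have hwk : w k - c = t * (p k - c) := by
    simp only [hw, Pi.add_apply, Pi.smul_apply, smul_eq_mul, hqk]; ring
  have habs : |w k - c| = t * |p k - c| := by
    rw [hwk, abs_mul, abs_of_nonneg ht0]
  have hdwq : dist w q = t * dist p q := by
    rw [dist_eq_norm, dist_eq_norm]
    have hws : w - q = t • (p - q) := by
      rw [hw]; module
    rw [hws, norm_smul, Real.norm_eq_abs, abs_of_nonneg ht0]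
  have hub : Metric.infDist w s ≤ t * Metric.infDist p s := by
    calc Metric.infDist w s ≤ dist w q := Metric.infDist_le_dist_of_mem hq
    _ = t * dist p q := hdwq
    _ = t * Metric.infDist p s := by rw [hattain]
  have hlb : |w k - c| ≤ Metric.infDist w s := by
    by_contra hcon
    push_neg at hcon
    obtain ⟨y, hy, hlt⟩ := (Metric.infDist_lt_iff hne).1 hcon
    refine absurd hlt (not_lt.2 ?_)
    have hyk : y k = c := hsub hy
    calc |w k - c| = |w k - y k| := by rw [hyk]
    _ = dist (w k) (y k) := (Real.dist_eq _ _).symm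
    _ ≤ dist w y := dist_le_pi_dist w y k
  have key : Metric.infDist w s = t * Metric.infDist p s := by
    refine le_antisymm hub ?_
    calc t * Metric.infDist p s = t * |p k - c| := by rw [hzone]
    _ = |w k - c| := habs.symm
    _ ≤ _ := hlb
  exact ⟨by rw [key, hzone, ← habs], key⟩
end

section
/- Let S be a finite family of nonempty compact sites in ℝ^d with the L∞ metric, and for s ∈ S let V(s) = {p : ∀ s' ∈ S, s' ≠ s → μ∞(p,s) < μ∞(p,s')}. Then the closure of V(s) is weakly star-shaped with respect to s: for every p in the closure of V(s) there exists q ∈ s such that every point of the open segment (p,q) lies in the closure of V(s). -/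
open Metric Filter

private lemma seg_mem_voronoi {d : ℕ} (S : Finset (Set (Fin d → ℝ)))
    (s : Set (Fin d → ℝ))
    (x q0 : Fin d → ℝ) (hq0 : q0 ∈ s)
    (hdist : Metric.infDist x s = dist x q0)
    (hx : ∀ s' ∈ S, s' ≠ s → Metric.infDist x s < Metric.infDist x s')
    (t : ℝ) (ht : t ∈ Set.Ioo (0:ℝ) 1) :
    ∀ s' ∈ S, s' ≠ s →
      Metric.infDist (t • x + (1 - t) • q0) s
        < Metric.infDist (t • x + (1 - t) • q0) s' := by
  obtain ⟨ht0, ht1⟩ := ht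
  set z := t • x + (1 - t) • q0 with hz
  have hzq : dist z q0 = t * dist x q0 := by
    have : z - q0 = t • (x - q0) := by
      simp only [hz]; module
    rw [dist_eq_norm, this, norm_smul, Real.norm_eq_abs, abs_of_pos ht0,
      ← dist_eq_norm]
  have hxz : dist x z = (1 - t) * dist x q0 := by
    have : x - z = (1 - t) • (x - q0) := by
      simp only [hz]; module
    rw [dist_eq_norm, this, norm_smul, Real.norm_eq_abs,
      abs_of_pos (by linarith), ← dist_eq_norm]
  have hzle : Metric.infDist z s ≤ t * dist x q0 := by
    rw [← hzq]; exact Metric.infDist_le_dist_of_mem hq0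
  intro s' hs' hne'
  have h1 : Metric.infDist x s < Metric.infDist x s' := hx s' hs' hne'
  have h2 : Metric.infDist x s' ≤ Metric.infDist z s' + dist x z :=
    Metric.infDist_le_infDist_add_dist
  calc Metric.infDist z s ≤ t * dist x q0 := hzle
    _ < Metric.infDist z s' := by
        rw [hxz] at h2; rw [hdist] at h1; nlinarith [dist_nonneg (x := x) (y := q0)]

/-- The closure of the Voronoi region of a site `s` (among a
finite family of nonempty compact sites in ℝ^d with the L∞ metric) is weakly
star-shaped with respect to `s`. -/
theorem stmt_4 {d : ℕ} (S : Finset (Set (Fin d → ℝ)))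
    (hne : ∀ s ∈ S, s.Nonempty) (hcpt : ∀ s ∈ S, IsCompact s)
    (s : Set (Fin d → ℝ)) (hs : s ∈ S)
    (p : Fin d → ℝ)
    (hp : p ∈ closure {x : Fin d → ℝ |
      ∀ s' ∈ S, s' ≠ s → Metric.infDist x s < Metric.infDist x s'}) :
    ∃ q ∈ s, ∀ t ∈ Set.Ioo (0:ℝ) 1,
      t • p + (1 - t) • q ∈ closure {x : Fin d → ℝ |
        ∀ s' ∈ S, s' ≠ s → Metric.infDist x s < Metric.infDist x s'} := by
  obtain ⟨u, hu, hulim⟩ := mem_closure_iff_seq_limit.1 hp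
  -- nearest points
  have hnear : ∀ n : ℕ, ∃ y ∈ s, Metric.infDist (u n) s = dist (u n) y := by
    intro n
    exact (hcpt s hs).exists_infDist_eq_dist (hne s hs) (u n)
  choose q hqmem hqdist using hnear
  obtain ⟨qbar, hqbar, φ, hφ, hqlim⟩ := (hcpt s hs).tendsto_subseq hqmem
  refine ⟨qbar, hqbar, fun t ht => ?_⟩
  have hlim : Tendsto (fun n => t • u (φ n) + (1 - t) • q (φ n)) atTop
      (nhds (t • p + (1 - t) • qbar)) :=
    ((hulim.comp hφ.tendsto_atTop).const_smul t).add (hqlim.const_smul (1 - t))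
  exact mem_closure_of_tendsto hlim (Eventually.of_forall fun n =>
    seg_mem_voronoi S s (u (φ n)) (q (φ n)) (hqmem (φ n)) (hqdist (φ n))
      (hu (φ n)) t ht)
end

section
/- Let S be a finite family of nonempty sites in ℝ^d with the L∞ metric. For a cell C (an axis-aligned closed box with center p_C and L∞-radius r_C) with p_C attaining distance δ_C = min_{s∈S} μ∞(p_C, s), every site s whose closed Voronoi region intersects C satisfies μ∞(p_C, s) ≤ 2·r_C + δ_C. -/
/-- Lemma 3(a), soundness of the soft predicate, first case:
if `p` lies in the cell `C` (center `p_C`, L∞-radius `r_C`) and `p` belongs to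
the closed Voronoi region of `s` (i.e. `μ∞(p,s) ≤ μ∞(p,s')` for all sites),
and `δ = min_{s'∈S} μ∞(p_C, s')`, then `μ∞(p_C, s) ≤ 2·r_C + δ`. -/
theorem stmt_8 {d : ℕ} (S : Finset (Set (Fin d → ℝ)))
    (hne : ∀ s ∈ S, s.Nonempty)
    (pC p : Fin d → ℝ) (rC δ : ℝ)
    (hp : dist pC p ≤ rC)
    (hδ : ∃ sstar ∈ S, δ = Metric.infDist pC sstar ∧
      ∀ s' ∈ S, δ ≤ Metric.infDist pC s')
    (s : Set (Fin d → ℝ)) (hs : s ∈ S)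
    (hmin : ∀ s' ∈ S, Metric.infDist p s ≤ Metric.infDist p s') :
    Metric.infDist pC s ≤ 2 * rC + δ := by
  obtain ⟨sstar, hstar, hδeq, -⟩ := hδ
  have h1 : Metric.infDist pC s ≤ Metric.infDist p s + dist pC p :=
    Metric.infDist_le_infDist_add_dist
  have h2 : Metric.infDist p s ≤ Metric.infDist p sstar := hmin _ hstar
  have h3 : Metric.infDist p sstar ≤ Metric.infDist pC sstar + dist p pC :=
    Metric.infDist_le_infDist_add_dist
  rw [dist_comm] at h3
  linarith [hδeq ▸ le_refl δ]
end

section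
/- Let s be a segment on the line {(x, c)} in ℝ² and p = (p₁,p₂) a point. Define the interval I_{p,s} on the line, centered at the projection (p₁, c) with radius |p₂ − c|. Then p ∈ Z(s) (i.e., μ∞(p,s) = |p₂ − c|) if and only if I_{p,s} ∩ s ≠ ∅. -/
/-- correctness of `inZone`: `p` belongs to the zone of the
horizontal segment `s = [x₀,x₁] × {c}` iff the interval `I_{p,s}` centered at
the projection `p.1` with radius `|p.2 − c|` meets `[x₀,x₁]`. -/
theorem stmt_13 (x₀ x₁ c : ℝ) (h : x₀ ≤ x₁) (p : ℝ × ℝ) :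
    Metric.infDist p (Set.Icc x₀ x₁ ×ˢ ({c} : Set ℝ)) = |p.2 - c| ↔
      (Set.Icc (p.1 - |p.2 - c|) (p.1 + |p.2 - c|) ∩ Set.Icc x₀ x₁).Nonempty := by
  set d := |p.2 - c| with hd
  set S := Set.Icc x₀ x₁ ×ˢ ({c} : Set ℝ) with hSdef
  have hS : S.Nonempty := ⟨(x₀, c), by simp [hSdef, h]⟩
  have hC : IsCompact S := isCompact_Icc.prod isCompact_singleton
  have hlow : ∀ q ∈ S, d ≤ dist p q := by
    rintro ⟨q1, q2⟩ ⟨hq1, hq2⟩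
    simp only [Set.mem_singleton_iff] at hq2
    subst hq2
    rw [Prod.dist_eq]
    exact le_max_of_le_right (by rw [Real.dist_eq])
  constructor
  · intro hinf
    obtain ⟨q, hq, hqd⟩ := hC.exists_infDist_eq_dist hS p
    rw [hinf] at hqd
    obtain ⟨hq1, hq2⟩ := hq
    have h1 : dist p.1 q.1 ≤ d := by
      rw [hqd, Prod.dist_eq]; exact le_max_left _ _
    rw [Real.dist_eq, abs_le] at h1
    exact ⟨q.1, ⟨by linarith [h1.1], by linarith [h1.2]⟩, hq1⟩
  · rintro ⟨t, ⟨ht1, ht2⟩, htI⟩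
    apply le_antisymm
    · have hmem : (t, c) ∈ S := ⟨htI, rfl⟩
      have hdist : dist p (t, c) = d := by
        rw [Prod.dist_eq]
        have h1 : dist p.1 t ≤ d := by
          rw [Real.dist_eq, abs_le]; constructor <;> linarith
        have h2 : dist p.2 c = d := by rw [Real.dist_eq]
        rw [h2]; exact max_eq_right h1
      calc Metric.infDist p S ≤ dist p (t, c) := Metric.infDist_le_dist_of_mem hmem
        _ = d := hdist
    · by_contra hlt
      push_neg at hlt
      obtain ⟨y, hy, hdy⟩ := (Metric.infDist_lt_iff hS).1 hlt
      exact absurd (hlow y hy) (not_le.2 hdy)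
end

section
/- Let s be a compact subset of the plane {x ∈ ℝ³ : x₃ = c} and let C be an axis-aligned closed box with center p_C and L∞-radius r_C, with top and bottom facets f₁, f₂ (those parallel to the plane x₃ = c). Let ρᵢ = μ∞(fᵢ, {x₃=c}) and p'_C the orthogonal projection of p_C onto the plane x₃ = c. Then Z(s) ∩ C ≠ ∅ if and only if there exists i ∈ {1,2} with B∞(p'_C, r_C + ρᵢ) ∩ s ≠ ∅, where Z(s) = {p : μ∞(p,s) = |p₃ − c|} and B∞ denotes a closed L∞ ball (taken within the plane x₃ = c). -/
/-- Auxiliary: backward direction, one facet at a time. -/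
lemma stmt_14_aux (c : ℝ) (s : Set (Fin 3 → ℝ)) (hne : s.Nonempty)
    (hsub : s ⊆ {x : Fin 3 → ℝ | x 2 = c})
    (pC : Fin 3 → ℝ) (rC : ℝ) (t ρ : ℝ) (ht : |t - pC 2| ≤ rC)
    (hρ : ρ = |t - c|)
    (q : Fin 3 → ℝ) (hq : q ∈ s)
    (hd : dist (Function.update pC 2 c) q ≤ rC + ρ) :
    ({p : Fin 3 → ℝ | Metric.infDist p s = |p 2 - c|} ∩
        Metric.closedBall pC rC).Nonempty := by
  have hρ0 : 0 ≤ ρ := hρ ▸ abs_nonneg _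
  have hr : 0 ≤ rC := le_trans (abs_nonneg _) ht
  have hq2 : q 2 = c := hsub hq
  set p : Fin 3 → ℝ :=
    Function.update (fun j => max (pC j - rC) (min (q j) (pC j + rC))) 2 t with hp
  have hcoord : ∀ j : Fin 3, j ≠ 2 → |pC j - q j| ≤ rC + ρ := by
    intro j hj
    have := dist_le_pi_dist (Function.update pC 2 c) q j
    rw [Function.update_of_ne hj, Real.dist_eq] at this
    linarith [this.trans hd]
  have hpball : p ∈ Metric.closedBall pC rC := by
    rw [Metric.mem_closedBall, dist_pi_le_iff hr]
    intro j
    rw [Real.dist_eq]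
    by_cases hj : j = 2
    · subst hj; simpa [hp] using ht
    · rw [hp, Function.update_of_ne hj]
      have h1 : pC j - rC ≤ pC j + rC := by linarith
      rw [abs_le]
      constructor
      · have := le_max_left (pC j - rC) (min (q j) (pC j + rC)); linarith
      · have h2 : max (pC j - rC) (min (q j) (pC j + rC)) ≤ pC j + rC :=
          max_le h1 ((min_le_right _ _))
        linarith
  have hpq : dist p q ≤ ρ := by
    rw [dist_pi_le_iff hρ0]
    intro j
    rw [Real.dist_eq]
    by_cases hj : j = 2
    · subst hj; simp only [hp, Function.update_self]; rw [hq2, ← hρ]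
    · rw [hp, Function.update_of_ne hj]
      have hb := abs_le.mp (hcoord j hj)
      have h1 : max (pC j - rC) (min (q j) (pC j + rC)) ≤ q j + ρ :=
        max_le (by linarith [hb.2]) ((min_le_left _ _).trans (by linarith))
      have h2 : q j - ρ ≤ max (pC j - rC) (min (q j) (pC j + rC)) :=
        (le_min (by linarith) (by linarith [hb.1])).trans (le_max_right _ _)
      rw [abs_le]; constructor <;> linarith
  have hp2 : |p 2 - c| = ρ := by simp only [hp, Function.update_self]; rw [hρ]
  refine ⟨p, ⟨?_, hpball⟩⟩
  have hle : Metric.infDist p s ≤ ρ := (Metric.infDist_le_dist_of_mem hq).trans hpq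
  have hge : ρ ≤ Metric.infDist p s := by
    by_contra hcon
    push_neg at hcon
    obtain ⟨y, hy, hlt⟩ := (Metric.infDist_lt_iff hne).mp hcon
    have h2 := dist_le_pi_dist p y 2
    have hy2 : y 2 = c := hsub hy
    rw [Real.dist_eq, hy2] at h2
    rw [hp2] at h2
    linarith
  show Metric.infDist p s = |p 2 - c|
  rw [hp2]; linarith

/-- Lemma 8, correctness of `ZoneInCell`: for a compact site `s`
in the plane `x 2 = c` of ℝ³ and a cubical cell `C` with center `p_C` and
L∞-radius `r_C`, the zone `Z(s)` meets `C` iff for some facet `f_i` of `C`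
parallel to the plane (at distance `ρ_i` from it), the closed L∞ ball centered
at the projection `p'_C` of `p_C` with radius `r_C + ρ_i` meets `s`. -/
theorem stmt_14 (c : ℝ) (s : Set (Fin 3 → ℝ)) (hne : s.Nonempty)
    (hcpt : IsCompact s) (hsub : s ⊆ {x : Fin 3 → ℝ | x 2 = c})
    (pC : Fin 3 → ℝ) (rC : ℝ) (hr : 0 ≤ rC)
    (ρ₁ ρ₂ : ℝ) (hρ₁ : ρ₁ = |pC 2 + rC - c|) (hρ₂ : ρ₂ = |pC 2 - rC - c|) :
    ({p : Fin 3 → ℝ | Metric.infDist p s = |p 2 - c|} ∩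
        Metric.closedBall pC rC).Nonempty ↔
      (Metric.closedBall (Function.update pC 2 c) (rC + ρ₁) ∩ s).Nonempty ∨
      (Metric.closedBall (Function.update pC 2 c) (rC + ρ₂) ∩ s).Nonempty := by
  have hρ₁0 : 0 ≤ ρ₁ := hρ₁ ▸ abs_nonneg _
  have hρ₂0 : 0 ≤ ρ₂ := hρ₂ ▸ abs_nonneg _
  constructor
  · rintro ⟨p, hpz, hpC⟩
    obtain ⟨q, hq, hdq⟩ := hcpt.exists_infDist_eq_dist hne p
    have hq2 : q 2 = c := hsub hq
    have hdist : dist p q = |p 2 - c| := by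
      rw [← hdq]; exact hpz
    have hb : |p 2 - pC 2| ≤ rC := by
      have := dist_le_pi_dist p pC 2
      rw [Real.dist_eq] at this
      exact this.trans (Metric.mem_closedBall.mp hpC)
    have hb' := abs_le.mp hb
    -- |p 2 - c| ≤ max ρ₁ ρ₂
    have hmax : |p 2 - c| ≤ max ρ₁ ρ₂ := by
      rw [abs_le]
      constructor
      · have h2 : -(pC 2 - rC - c) ≤ ρ₂ := hρ₂ ▸ neg_le_abs _
        have := le_max_right ρ₁ ρ₂
        linarith [hb'.1]
      · have h1 : pC 2 + rC - c ≤ ρ₁ := hρ₁ ▸ le_abs_self _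
        have := le_max_left ρ₁ ρ₂
        linarith [hb'.2]
    have hcoord : ∀ j : Fin 3, j ≠ 2 →
        |pC j - q j| ≤ rC + max ρ₁ ρ₂ := by
      intro j hj
      have h1 := dist_le_pi_dist p q j
      rw [Real.dist_eq, hdist] at h1
      have h2 := dist_le_pi_dist p pC j
      rw [Real.dist_eq] at h2
      have h2' := h2.trans (Metric.mem_closedBall.mp hpC)
      calc |pC j - q j| ≤ |pC j - p j| + |p j - q j| := abs_sub_le _ _ _
        _ ≤ rC + max ρ₁ ρ₂ := by
            rw [abs_sub_comm] at h2'
            linarith [h1.trans hmax]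
    have hball : ∀ ρ, max ρ₁ ρ₂ ≤ ρ → 0 ≤ ρ →
        q ∈ Metric.closedBall (Function.update pC 2 c) (rC + ρ) := by
      intro ρ hρle hρ0
      rw [Metric.mem_closedBall, dist_pi_le_iff (by linarith)]
      intro j
      rw [Real.dist_eq]
      by_cases hj : j = 2
      · subst hj; simp [hq2]; linarith
      · rw [Function.update_of_ne hj]
        rw [abs_sub_comm]; exact (hcoord j hj).trans (add_le_add_right hρle rC)
    rcases le_total ρ₂ ρ₁ with h | h
    · exact Or.inl ⟨q, hball ρ₁ (max_le le_rfl h) hρ₁0, hq⟩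
    · exact Or.inr ⟨q, hball ρ₂ (max_le h le_rfl) hρ₂0, hq⟩
  · rintro (⟨q, hqb, hq⟩ | ⟨q, hqb, hq⟩)
    · exact stmt_14_aux c s hne hsub pC rC (pC 2 + rC) ρ₁
        (by simp [abs_of_nonneg hr]) (by rw [hρ₁]) q hq
        (by rw [dist_comm]; exact Metric.mem_closedBall.mp hqb)
    · exact stmt_14_aux c s hne hsub pC rC (pC 2 - rC) ρ₂
        (by rw [show pC 2 - rC - pC 2 = -rC by ring, abs_neg, abs_of_nonneg hr])
        (by rw [hρ₂]) q hq (by rw [dist_comm]; exact Metric.mem_closedBall.mp hqb)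
end
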